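/- Let R be a ring with invariant basis number. Then every automorphism φ of the category S_R is semi-inner: there exist a ring automorphism σ of R and, for each n ∈ ℕ, an additive-group isomorphism s_n : R^n → φ(R^n) satisfying s_n(r·a) = σ(r)·s_n(a) for all r ∈ R and a ∈ R^n, such that φ(f) ∘ s_n = s_m ∘ f for every R-linear map f : R^n → R^m. -/

import Mathlib

open CategoryTheory

/-- The category `S_R`: objects are the natural numbers, the object `n` standing for the
free left `R`-module `R^n = (Fin n → R)`; morphisms `n ⟶ m` are the `R`-linear maps
`R^n → R^m`.  This is (a presentation of) the full subcategory of left `R`-modules with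
objects exactly the modules `R^n`, `n ∈ ℕ`. -/
def SR (R : Type) [Ring R] : Type := ℕ

instance (R : Type) [Ring R] : Category (SR R) where
  Hom n m := (Fin n → R) →ₗ[R] (Fin m → R)
  id _ := LinearMap.id
  comp f g := g.comp f
  id_comp f := LinearMap.comp_id f
  comp_id f := LinearMap.id_comp f
  assoc f g h := (LinearMap.comp_assoc f g h).symm

variable {R : Type} [Ring R]

/-- The object of `S_R` corresponding to `n ∈ ℕ`, i.e. the module `R^n`. -/
def ob (R : Type) [Ring R] (n : ℕ) : SR R := n

/-- A morphism of `S_R` is just an `R`-linear map. -/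
def ofLin {n m : ℕ} (f : (Fin n → R) →ₗ[R] (Fin m → R)) : ob R n ⟶ ob R m := f

/-- The underlying `R`-linear map of a morphism of `S_R`. -/
def toLin {n m : SR R} (f : n ⟶ m) : (Fin n → R) →ₗ[R] (Fin m → R) := f


section Aux

/-- Being a product of `R^a` and `R^b` in `S_R`, phrased with linear maps. -/
def IsProd (a b X : ℕ) (p1 : (Fin X → R) →ₗ[R] (Fin a → R))
    (p2 : (Fin X → R) →ₗ[R] (Fin b → R)) : Prop :=
  ∀ (c : ℕ) (u : (Fin c → R) →ₗ[R] (Fin a → R)) (v : (Fin c → R) →ₗ[R] (Fin b → R)),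
    ∃! w : (Fin c → R) →ₗ[R] (Fin X → R), p1.comp w = u ∧ p2.comp w = v

def Pr1 (R : Type) [Ring R] (a b : ℕ) : (Fin (a + b) → R) →ₗ[R] (Fin a → R) :=
  LinearMap.funLeft R R (Fin.castAdd b)

def Pr2 (R : Type) [Ring R] (a b : ℕ) : (Fin (a + b) → R) →ₗ[R] (Fin b → R) :=
  LinearMap.funLeft R R (Fin.natAdd a)

def pairL {a b c : ℕ} (u : (Fin c → R) →ₗ[R] (Fin a → R)) (v : (Fin c → R) →ₗ[R] (Fin b → R)) :
    (Fin c → R) →ₗ[R] (Fin (a + b) → R) where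
  toFun x i := Fin.addCases (fun j => u x j) (fun j => v x j) i
  map_add' x y := by
    funext i
    induction i using Fin.addCases with
    | left j => simp
    | right j => simp
  map_smul' r x := by
    funext i
    induction i using Fin.addCases with
    | left j => simp
    | right j => simp

theorem Pr1_pair {a b c : ℕ} (u : (Fin c → R) →ₗ[R] (Fin a → R))
    (v : (Fin c → R) →ₗ[R] (Fin b → R)) : (Pr1 R a b).comp (pairL u v) = u := by
  apply LinearMap.ext; intro x; funext j
  simp [Pr1, pairL, LinearMap.funLeft]

theorem Pr2_pair {a b c : ℕ} (u : (Fin c → R) →ₗ[R] (Fin a → R))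
    (v : (Fin c → R) →ₗ[R] (Fin b → R)) : (Pr2 R a b).comp (pairL u v) = v := by
  apply LinearMap.ext; intro x; funext j
  simp [Pr2, pairL, LinearMap.funLeft]

theorem pair_unique {a b c : ℕ} (w : (Fin c → R) →ₗ[R] (Fin (a + b) → R)) :
    w = pairL ((Pr1 R a b).comp w) ((Pr2 R a b).comp w) := by
  apply LinearMap.ext; intro x; funext i
  induction i using Fin.addCases with
  | left j => simp [pairL, Pr1, LinearMap.funLeft]
  | right j => simp [pairL, Pr2, LinearMap.funLeft]

theorem stdIsProd (a b : ℕ) : IsProd a b (a + b) (Pr1 R a b) (Pr2 R a b) := by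
  intro c u v
  refine ⟨pairL u v, ⟨Pr1_pair u v, Pr2_pair u v⟩, ?_⟩
  rintro w ⟨h1, h2⟩
  rw [← h1, ← h2]
  exact pair_unique w

theorem isProd_eq (hIBN : ∀ n m : ℕ, Nonempty ((Fin n → R) ≃ₗ[R] (Fin m → R)) → n = m)
    {a b X : ℕ} {p1 : (Fin X → R) →ₗ[R] (Fin a → R)} {p2 : (Fin X → R) →ₗ[R] (Fin b → R)}
    (h : IsProd a b X p1 p2) : X = a + b := by
  obtain ⟨w', ⟨hw1', hw2'⟩, -⟩ := h (a + b) (Pr1 R a b) (Pr2 R a b)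
  obtain ⟨w, ⟨hw1, hw2⟩, -⟩ := stdIsProd (R := R) a b X p1 p2
  have h1 : w'.comp w = LinearMap.id := by
    obtain ⟨z, hz, hu⟩ := h X p1 p2
    have e1 := hu (w'.comp w)
      ⟨by rw [← LinearMap.comp_assoc, hw1', hw1], by rw [← LinearMap.comp_assoc, hw2', hw2]⟩
    have e2 := hu LinearMap.id ⟨LinearMap.comp_id _, LinearMap.comp_id _⟩
    exact e1.trans e2.symm
  have h2 : w.comp w' = LinearMap.id := by
    obtain ⟨z, hz, hu⟩ := stdIsProd (R := R) a b (a + b) (Pr1 R a b) (Pr2 R a b)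
    have e1 := hu (w.comp w')
      ⟨by rw [← LinearMap.comp_assoc, hw1, hw1'], by rw [← LinearMap.comp_assoc, hw2, hw2']⟩
    have e2 := hu LinearMap.id ⟨LinearMap.comp_id _, LinearMap.comp_id _⟩
    exact e1.trans e2.symm
  exact hIBN X (a + b) ⟨LinearEquiv.ofLinear w w' h2 h1⟩

theorem isProd_transfer (T : ℕ → ℕ)
    (Ψ : ∀ {n m : ℕ}, ((Fin n → R) →ₗ[R] (Fin m → R)) → ((Fin (T n) → R) →ₗ[R] (Fin (T m) → R)))
    (hcomp : ∀ {a b c : ℕ} (f : (Fin a → R) →ₗ[R] (Fin b → R))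
      (g : (Fin b → R) →ₗ[R] (Fin c → R)), Ψ (g.comp f) = (Ψ g).comp (Ψ f))
    (hbij : ∀ n m : ℕ, Function.Bijective (@Ψ n m))
    (hsurj : Function.Surjective T)
    {a b X : ℕ} {p1 : (Fin X → R) →ₗ[R] (Fin a → R)} {p2 : (Fin X → R) →ₗ[R] (Fin b → R)}
    (h : IsProd a b X p1 p2) :
    IsProd (T a) (T b) (T X) (Ψ p1) (Ψ p2) := by
  intro c u v
  obtain ⟨c', rfl⟩ := hsurj c
  obtain ⟨u', rfl⟩ := (hbij c' a).2 u
  obtain ⟨v', rfl⟩ := (hbij c' b).2 v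
  obtain ⟨w, ⟨hw1, hw2⟩, huniq⟩ := h c' u' v'
  refine ⟨Ψ w, ⟨by rw [← hcomp, hw1], by rw [← hcomp, hw2]⟩, ?_⟩
  rintro z ⟨hz1, hz2⟩
  obtain ⟨z', rfl⟩ := (hbij c' X).2 z
  rw [← hcomp] at hz1 hz2
  exact congrArg Ψ (huniq z' ⟨(hbij _ _).1 hz1, (hbij _ _).1 hz2⟩)

theorem biprod_add {c d X : ℕ}
    {P1 P2 : (Fin X → R) →ₗ[R] (Fin d → R)} {I1 I2 : (Fin d → R) →ₗ[R] (Fin X → R)}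
    (hprod : IsProd d d X P1 P2)
    (h11 : P1.comp I1 = LinearMap.id) (h21 : P2.comp I1 = 0)
    (h12 : P1.comp I2 = 0) (h22 : P2.comp I2 = LinearMap.id)
    {f g : (Fin c → R) →ₗ[R] (Fin d → R)} {W : (Fin c → R) →ₗ[R] (Fin X → R)}
    {D : (Fin X → R) →ₗ[R] (Fin d → R)}
    (hW1 : P1.comp W = f) (hW2 : P2.comp W = g)
    (hD1 : D.comp I1 = LinearMap.id) (hD2 : D.comp I2 = LinearMap.id) :
    D.comp W = f + g := by
  have hid : I1.comp P1 + I2.comp P2 = LinearMap.id := by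
    obtain ⟨w, -, huniq⟩ := hprod X P1 P2
    have e1 : P1.comp (I1.comp P1 + I2.comp P2) = P1 := by
      apply LinearMap.ext; intro x
      have a1 := LinearMap.congr_fun h11 (P1 x)
      have a2 := LinearMap.congr_fun h12 (P2 x)
      simp only [LinearMap.comp_apply, LinearMap.id_apply, LinearMap.zero_apply] at a1 a2
      simp only [LinearMap.comp_apply, LinearMap.add_apply, map_add, a1, a2, add_zero]
    have e2 : P2.comp (I1.comp P1 + I2.comp P2) = P2 := by
      apply LinearMap.ext; intro x
      have a1 := LinearMap.congr_fun h21 (P1 x)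
      have a2 := LinearMap.congr_fun h22 (P2 x)
      simp only [LinearMap.comp_apply, LinearMap.id_apply, LinearMap.zero_apply] at a1 a2
      simp only [LinearMap.comp_apply, LinearMap.add_apply, map_add, a1, a2, zero_add]
    have q1 := huniq (I1.comp P1 + I2.comp P2) ⟨e1, e2⟩
    have q2 := huniq LinearMap.id ⟨LinearMap.comp_id _, LinearMap.comp_id _⟩
    exact q1.trans q2.symm
  apply LinearMap.ext; intro x
  have hx := LinearMap.congr_fun hid (W x)
  simp only [LinearMap.add_apply, LinearMap.comp_apply, LinearMap.id_apply] at hx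
  have b1 := LinearMap.congr_fun hD1 (P1 (W x))
  have b2 := LinearMap.congr_fun hD2 (P2 (W x))
  have c1 := LinearMap.congr_fun hW1 x
  have c2 := LinearMap.congr_fun hW2 x
  simp only [LinearMap.comp_apply, LinearMap.id_apply] at b1 b2 c1 c2
  calc D (W x) = D (I1 (P1 (W x)) + I2 (P2 (W x))) := by rw [hx]
  _ = (f + g) x := by rw [map_add, b1, b2, c1, c2]; rfl

end Aux


variable {R : Type} [Ring R]

def eOne (R : Type) [Ring R] : Fin 1 → R := fun _ => 1

def rho (r : R) : (Fin 1 → R) →ₗ[R] (Fin 1 → R) where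
  toFun x i := x i * r
  map_add' x y := by funext i; simp [add_mul]
  map_smul' c x := by funext i; simp [mul_assoc]

theorem rho_apply (r : R) (x : Fin 1 → R) (i : Fin 1) : rho r x i = x i * r := rfl

theorem rho_e (t : R) : rho t (eOne R) = t • eOne R := by
  funext i; simp [rho_apply, eOne]

theorem rho_e0 (r : R) : rho r (eOne R) 0 = r := by simp [rho_apply, eOne]

theorem rho_one : rho (1 : R) = LinearMap.id := by
  apply LinearMap.ext; intro x; funext i; simp [rho_apply]

theorem rho_zero : rho (0 : R) = 0 := by
  apply LinearMap.ext; intro x; funext i; simp [rho_apply]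

theorem rho_add (r t : R) : rho (r + t) = rho r + rho t := by
  apply LinearMap.ext; intro x; funext i
  simp [rho_apply, mul_add, LinearMap.add_apply]

theorem rho_comp (r t : R) : (rho t).comp (rho r) = rho (r * t) := by
  apply LinearMap.ext; intro x; funext i
  simp [rho_apply, mul_assoc]

theorem xeq (x : Fin 1 → R) : x = x 0 • eOne R := by
  funext j
  rw [Subsingleton.elim j 0]
  simp [eOne]

theorem rho_eq (f : (Fin 1 → R) →ₗ[R] (Fin 1 → R)) : f = rho (f (eOne R) 0) := by
  apply LinearMap.ext; intro x; funext i
  conv_lhs => rw [xeq x, map_smul]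
  rw [Subsingleton.elim i 0]
  simp [rho_apply]

def eps {n : ℕ} (a : Fin n → R) : (Fin 1 → R) →ₗ[R] (Fin n → R) where
  toFun x := x 0 • a
  map_add' x y := by simp [add_smul]
  map_smul' c x := by simp [mul_smul]

theorem eps_apply {n : ℕ} (a : Fin n → R) (x : Fin 1 → R) : eps a x = x 0 • a := rfl

theorem eps_e {n : ℕ} (a : Fin n → R) : eps a (eOne R) = a := by
  simp [eps_apply, eOne]

theorem eps_eq {n : ℕ} (f : (Fin 1 → R) →ₗ[R] (Fin n → R)) : f = eps (f (eOne R)) := by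
  apply LinearMap.ext; intro x
  conv_lhs => rw [xeq x, map_smul]
  rfl

theorem eps_add {n : ℕ} (a b : Fin n → R) : eps (a + b) = eps a + eps b := by
  apply LinearMap.ext; intro x
  simp [eps_apply, smul_add, LinearMap.add_apply]

theorem eps_zero {n : ℕ} : eps (0 : Fin n → R) = 0 := by
  apply LinearMap.ext; intro x
  simp [eps_apply]

theorem eps_smul {n : ℕ} (r : R) (a : Fin n → R) :
    eps (r • a) = (eps a).comp (rho r) := by
  apply LinearMap.ext; intro x
  simp [eps_apply, LinearMap.comp_apply, rho_apply, smul_smul]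

theorem eps_comp {n m : ℕ} (f : (Fin n → R) →ₗ[R] (Fin m → R)) (a : Fin n → R) :
    eps (f a) = f.comp (eps a) := by
  apply LinearMap.ext; intro x
  simp [eps_apply, LinearMap.comp_apply, map_smul]

theorem main_aux (R : Type) [Ring R]
    (Ψ : ∀ {n m : ℕ}, ((Fin n → R) →ₗ[R] (Fin m → R)) → ((Fin n → R) →ₗ[R] (Fin m → R)))
    (hcomp : ∀ {a b c : ℕ} (f : (Fin a → R) →ₗ[R] (Fin b → R))
      (g : (Fin b → R) →ₗ[R] (Fin c → R)), Ψ (g.comp f) = (Ψ g).comp (Ψ f))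
    (hid : ∀ n : ℕ, Ψ (LinearMap.id : (Fin n → R) →ₗ[R] (Fin n → R)) = LinearMap.id)
    (hbij : ∀ n m : ℕ, Function.Bijective (@Ψ n m)) :
    ∃ (σ : R ≃+* R) (s : ∀ n : ℕ, (Fin n → R) ≃+ (Fin n → R)),
      (∀ (n : ℕ) (r : R) (a : Fin n → R), s n (r • a) = σ r • s n a) ∧
      (∀ (n m : ℕ) (f : (Fin n → R) →ₗ[R] (Fin m → R)) (a : Fin n → R),
        Ψ f (s n a) = s m (f a)) := by
  -- Ψ kills zero maps
  have hzero : ∀ n m : ℕ, Ψ (0 : (Fin n → R) →ₗ[R] (Fin m → R)) = 0 := by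
    intro n m
    have h0 : (0 : (Fin n → R) →ₗ[R] (Fin m → R)) =
        (0 : (Fin 0 → R) →ₗ[R] (Fin m → R)).comp (0 : (Fin n → R) →ₗ[R] (Fin 0 → R)) := by
      apply LinearMap.ext; intro x; simp
    have hsub : ∀ h : (Fin 0 → R) →ₗ[R] (Fin m → R), h = 0 := by
      intro h; apply LinearMap.ext; intro x
      rw [Subsingleton.elim x 0, map_zero]; rfl
    rw [h0, hcomp, hsub (Ψ (0 : (Fin 0 → R) →ₗ[R] (Fin m → R))), LinearMap.zero_comp]
    exact h0
  -- Ψ is additive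
  have hadd : ∀ {n m : ℕ} (f g : (Fin n → R) →ₗ[R] (Fin m → R)), Ψ (f + g) = Ψ f + Ψ g := by
    intro n m f g
    have hI11 : (Pr1 R m m).comp (pairL LinearMap.id (0 : (Fin m → R) →ₗ[R] (Fin m → R)))
        = LinearMap.id := Pr1_pair _ _
    have hI21 : (Pr2 R m m).comp (pairL LinearMap.id (0 : (Fin m → R) →ₗ[R] (Fin m → R)))
        = 0 := Pr2_pair _ _
    have hI12 : (Pr1 R m m).comp (pairL (0 : (Fin m → R) →ₗ[R] (Fin m → R)) LinearMap.id)
        = 0 := Pr1_pair _ _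
    have hI22 : (Pr2 R m m).comp (pairL (0 : (Fin m → R) →ₗ[R] (Fin m → R)) LinearMap.id)
        = LinearMap.id := Pr2_pair _ _
    set I1 := pairL LinearMap.id (0 : (Fin m → R) →ₗ[R] (Fin m → R)) with hI1def
    set I2 := pairL (0 : (Fin m → R) →ₗ[R] (Fin m → R)) LinearMap.id with hI2def
    set D := Pr1 R m m + Pr2 R m m with hDdef
    have hDI1 : D.comp I1 = LinearMap.id := by
      apply LinearMap.ext; intro x
      have a1 := LinearMap.congr_fun hI11 x
      have a2 := LinearMap.congr_fun hI21 x
      simp only [LinearMap.comp_apply, LinearMap.id_apply, LinearMap.zero_apply] at a1 a2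
      simp only [LinearMap.comp_apply, hDdef, LinearMap.add_apply, a1, a2, add_zero,
        LinearMap.id_apply]
    have hDI2 : D.comp I2 = LinearMap.id := by
      apply LinearMap.ext; intro x
      have a1 := LinearMap.congr_fun hI12 x
      have a2 := LinearMap.congr_fun hI22 x
      simp only [LinearMap.comp_apply, LinearMap.id_apply, LinearMap.zero_apply] at a1 a2
      simp only [LinearMap.comp_apply, hDdef, LinearMap.add_apply, a1, a2, zero_add,
        LinearMap.id_apply]
    have hfg : f + g = D.comp (pairL f g) := by
      apply LinearMap.ext; intro x
      have c1 := LinearMap.congr_fun (Pr1_pair f g) x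
      have c2 := LinearMap.congr_fun (Pr2_pair f g) x
      simp only [LinearMap.comp_apply] at c1 c2
      simp only [LinearMap.comp_apply, hDdef, LinearMap.add_apply, c1, c2]
    have hprod' : IsProd m m (m + m) (Ψ (Pr1 R m m)) (Ψ (Pr2 R m m)) :=
      isProd_transfer id (fun {n m} f => Ψ f) (fun f g => hcomp f g) hbij
        Function.surjective_id (stdIsProd m m)
    rw [hfg, hcomp]
    exact biprod_add hprod'
      (by rw [← hcomp, hI11, hid]) (by rw [← hcomp, hI21, hzero])
      (by rw [← hcomp, hI12, hzero]) (by rw [← hcomp, hI22, hid])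
      (by rw [← hcomp, Pr1_pair]) (by rw [← hcomp, Pr2_pair])
      (by rw [← hcomp, hDI1, hid]) (by rw [← hcomp, hDI2, hid])
  -- the ring automorphism
  have hρΨ : ∀ r : R, Ψ (rho r) = rho (Ψ (rho r) (eOne R) 0) := fun r => rho_eq _
  set σ₀ : R → R := fun r => Ψ (rho r) (eOne R) 0 with hσ₀def
  have hρinj : ∀ {r t : R}, rho (R := R) r = rho t → r = t := by
    intro r t h
    calc r = rho r (eOne R) 0 := (rho_e0 r).symm
    _ = rho t (eOne R) 0 := by rw [h]
    _ = t := rho_e0 t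
  have hσmul : ∀ r t : R, σ₀ (r * t) = σ₀ r * σ₀ t := by
    intro r t
    have key : Ψ (rho (r * t)) = rho (σ₀ r * σ₀ t) := by
      rw [← rho_comp, hcomp, hρΨ r, hρΨ t, rho_comp]
    show Ψ (rho (r * t)) (eOne R) 0 = σ₀ r * σ₀ t
    rw [key, rho_e0]
  have hσ1 : σ₀ 1 = 1 := by
    show Ψ (rho 1) (eOne R) 0 = 1
    rw [rho_one, hid]
    simp [eOne]
  have hσadd : ∀ r t : R, σ₀ (r + t) = σ₀ r + σ₀ t := by
    intro r t
    show Ψ (rho (r + t)) (eOne R) 0 = _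
    rw [rho_add, hadd]
    rfl
  have hσ0 : σ₀ 0 = 0 := by
    show Ψ (rho 0) (eOne R) 0 = 0
    rw [rho_zero, hzero]
    rfl
  have hσbij : Function.Bijective σ₀ := by
    constructor
    · intro r t h
      have h1 : Ψ (rho r) = Ψ (rho t) := by
        rw [hρΨ r, hρΨ t]
        exact congrArg rho h
      exact hρinj ((hbij 1 1).1 h1)
    · intro t
      obtain ⟨f, hf⟩ := (hbij 1 1).2 (rho t)
      refine ⟨f (eOne R) 0, ?_⟩
      have : Ψ (rho (f (eOne R) 0)) = rho t := by rw [← rho_eq f, hf]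
      show Ψ (rho (f (eOne R) 0)) (eOne R) 0 = t
      rw [this, rho_e0]
  set σh : R →+* R :=
    { toFun := σ₀, map_one' := hσ1, map_mul' := hσmul, map_zero' := hσ0,
      map_add' := hσadd } with hσhdef
  -- the additive isomorphisms
  have hs0add : ∀ {n : ℕ} (a b : Fin n → R),
      Ψ (eps (a + b)) (eOne R) = Ψ (eps a) (eOne R) + Ψ (eps b) (eOne R) := by
    intro n a b
    rw [eps_add, hadd]
    rfl
  have hs0zero : ∀ n : ℕ, Ψ (eps (0 : Fin n → R)) (eOne R) = 0 := by
    intro n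
    rw [eps_zero, hzero]
    rfl
  have hepsinj : ∀ {n : ℕ} {a b : Fin n → R}, eps (R := R) a = eps b → a = b := by
    intro n a b h
    calc a = eps a (eOne R) := (eps_e a).symm
    _ = eps b (eOne R) := by rw [h]
    _ = b := eps_e b
  have hsbij : ∀ n : ℕ, Function.Bijective (fun a : Fin n → R => Ψ (eps a) (eOne R)) := by
    intro n
    constructor
    · intro a b h
      have h1 : Ψ (eps a) = Ψ (eps b) := by
        rw [eps_eq (Ψ (eps a)), eps_eq (Ψ (eps b))]
        exact congrArg eps h
      exact hepsinj ((hbij 1 n).1 h1)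
    · intro b
      obtain ⟨f, hf⟩ := (hbij 1 n).2 (eps b)
      refine ⟨f (eOne R), ?_⟩
      have : Ψ (eps (f (eOne R))) = eps b := by rw [← eps_eq f, hf]
      show Ψ (eps (f (eOne R))) (eOne R) = b
      rw [this, eps_e]
  set s₀ : ∀ n : ℕ, (Fin n → R) →+ (Fin n → R) := fun n =>
    { toFun := fun a => Ψ (eps a) (eOne R)
      map_zero' := hs0zero n
      map_add' := hs0add } with hs₀def
  refine ⟨RingEquiv.ofBijective σh hσbij,
    fun n => AddEquiv.ofBijective (s₀ n) (hsbij n), ?_, ?_⟩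
  · intro n r a
    show Ψ (eps (r • a)) (eOne R) = σ₀ r • Ψ (eps a) (eOne R)
    rw [eps_smul, hcomp, LinearMap.comp_apply, hρΨ r]
    rw [show Ψ (rho r) (eOne R) 0 = σ₀ r from rfl]
    rw [rho_e, map_smul]
  · intro n m f a
    show Ψ f (Ψ (eps a) (eOne R)) = Ψ (eps (f a)) (eOne R)
    rw [eps_comp, hcomp, LinearMap.comp_apply]

def castAE {R : Type} [Ring R] {k l : ℕ} (h : k = l) : (Fin k → R) ≃+ (Fin l → R) :=
  (LinearEquiv.funCongrLeft R R (finCongr h.symm)).toAddEquiv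

theorem castAE_refl {R : Type} [Ring R] {k : ℕ} (x : Fin k → R) :
    castAE (R := R) (rfl : k = k) x = x := by
  funext i
  simp [castAE]

theorem castAE_smul {R : Type} [Ring R] {k l : ℕ} (h : k = l) (r : R) (x : Fin k → R) :
    castAE (R := R) h (r • x) = r • castAE h x := by
  subst h
  rw [castAE_refl, castAE_refl]

def castL {R : Type} [Ring R] {k l : ℕ} (h : k = l) : (Fin k → R) →ₗ[R] (Fin l → R) :=
  (LinearEquiv.funCongrLeft R R (finCongr h.symm)).toLinearMap

theorem castL_refl {R : Type} [Ring R] {k : ℕ} (x : Fin k → R) :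
    castL (R := R) (rfl : k = k) x = x := by
  funext i
  simp [castL]

theorem castL_rl {R : Type} [Ring R] {k l : ℕ} (h : k = l) (x : Fin l → R) :
    castL (R := R) h (castL h.symm x) = x := by
  subst h
  rw [castL_refl, castL_refl]

theorem castL_lr {R : Type} [Ring R] {k l : ℕ} (h : k = l) (x : Fin k → R) :
    castL (R := R) h.symm (castL h x) = x := by
  subst h
  rw [castL_refl, castL_refl]

theorem stmt5' (R : Type) [Ring R]
    (hIBN : ∀ n m : ℕ, Nonempty ((Fin n → R) ≃ₗ[R] (Fin m → R)) → n = m)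
    (φ : Aut (Cat.of (SR R))) :
    ∃ (σ : R ≃+* R)
      (s : ∀ n : ℕ, (Fin n → R) ≃+ (Fin ((φ.hom.toFunctor : SR R ⥤ SR R).obj (ob R n)) → R)),
      (∀ (n : ℕ) (r : R) (a : Fin n → R), s n (r • a) = σ r • s n a) ∧
      (∀ (n m : ℕ) (f : ob R n ⟶ ob R m) (a : Fin n → R),
        toLin ((φ.hom.toFunctor : SR R ⥤ SR R).map f) (s n a) = s m (toLin f a)) := by
  classical
  have hmapbij : ∀ n m : SR R,
      Function.Bijective (fun f : n ⟶ m => (φ.hom.toFunctor : SR R ⥤ SR R).map f) :=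
    fun n m => ((Cat.equivOfIso φ).fullyFaithfulFunctor.homEquiv (X := n) (Y := m)).bijective
  have hFG : ∀ n : SR R, (φ.hom.toFunctor : SR R ⥤ SR R).obj ((φ.inv.toFunctor : SR R ⥤ SR R).obj n) = n :=
    fun n => CategoryTheory.Functor.congr_obj
      (show (φ.inv.toFunctor : SR R ⥤ SR R) ⋙ (φ.hom.toFunctor : SR R ⥤ SR R) = 𝟭 (SR R) from congrArg Cat.Hom.toFunctor φ.inv_hom_id) n
  set T : ℕ → ℕ := fun n => (φ.hom.toFunctor : SR R ⥤ SR R).obj (ob R n) with hTdef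
  have hsurjT : Function.Surjective T := fun c => ⟨(φ.inv.toFunctor : SR R ⥤ SR R).obj c, hFG c⟩
  let Ψ₁ : ∀ {n m : ℕ}, ((Fin n → R) →ₗ[R] (Fin m → R)) →
      ((Fin (T n) → R) →ₗ[R] (Fin (T m) → R)) :=
    fun {n m} f => toLin ((φ.hom.toFunctor : SR R ⥤ SR R).map (ofLin f))
  have hcomp₁ : ∀ {a b c : ℕ} (f : (Fin a → R) →ₗ[R] (Fin b → R))
      (g : (Fin b → R) →ₗ[R] (Fin c → R)), Ψ₁ (g.comp f) = (Ψ₁ g).comp (Ψ₁ f) := by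
    intro a b c f g
    show toLin ((φ.hom.toFunctor : SR R ⥤ SR R).map (ofLin f ≫ ofLin g)) = _
    exact congrArg toLin ((φ.hom.toFunctor : SR R ⥤ SR R).map_comp (ofLin f) (ofLin g))
  have hbij₁ : ∀ n m : ℕ, Function.Bijective (@Ψ₁ n m) := fun n m => hmapbij (ob R n) (ob R m)
  have hTadd : ∀ a b : ℕ, T (a + b) = T a + T b := fun a b =>
    isProd_eq hIBN (isProd_transfer T (fun {n m} f => Ψ₁ f) hcomp₁ hbij₁ hsurjT
      (stdIsProd a b))
  have hT0 : T 0 = 0 := by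
    have h : T 0 = T 0 + T 0 := by simpa using hTadd 0 0
    omega
  have hTmul : ∀ n : ℕ, T n = n * T 1 := by
    intro n
    induction n with
    | zero => simpa using hT0
    | succ k ih => rw [hTadd k 1, ih]; ring
  have hT1 : T 1 = 1 := by
    obtain ⟨k, hk⟩ := hsurjT 1
    have h := hTmul k
    rw [hk] at h
    exact Nat.eq_one_of_mul_eq_one_left h.symm
  have hT : ∀ n : ℕ, T n = n := fun n => by rw [hTmul n, hT1, mul_one]
  -- the object-fixing version of φ
  let Ψ : ∀ {n m : ℕ}, ((Fin n → R) →ₗ[R] (Fin m → R)) → ((Fin n → R) →ₗ[R] (Fin m → R)) :=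
    fun {n m} f => (castL (R := R) (hT m)).comp
      ((toLin ((φ.hom.toFunctor : SR R ⥤ SR R).map (ofLin f))).comp (castL (R := R) (hT n).symm))
  have hcompΨ : ∀ {a b c : ℕ} (f : (Fin a → R) →ₗ[R] (Fin b → R))
      (g : (Fin b → R) →ₗ[R] (Fin c → R)), Ψ (g.comp f) = (Ψ g).comp (Ψ f) := by
    intro a b c f g
    have hm : toLin ((φ.hom.toFunctor : SR R ⥤ SR R).map (ofLin (g.comp f)))
        = (toLin ((φ.hom.toFunctor : SR R ⥤ SR R).map (ofLin g))).comp
            (toLin ((φ.hom.toFunctor : SR R ⥤ SR R).map (ofLin f))) := by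
      exact congrArg toLin ((φ.hom.toFunctor : SR R ⥤ SR R).map_comp (ofLin f) (ofLin g))
    apply LinearMap.ext; intro x
    have e1 : Ψ (g.comp f) x = castL (R := R) (hT c)
        (toLin ((φ.hom.toFunctor : SR R ⥤ SR R).map (ofLin (g.comp f))) (castL (hT a).symm x)) := rfl
    have e2 : ((Ψ g).comp (Ψ f)) x = castL (R := R) (hT c)
        (toLin ((φ.hom.toFunctor : SR R ⥤ SR R).map (ofLin g)) (castL (hT b).symm (castL (hT b)
          (toLin ((φ.hom.toFunctor : SR R ⥤ SR R).map (ofLin f)) (castL (hT a).symm x))))) := rfl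
    rw [e1, e2, hm, castL_lr]
    rfl
  have hidΨ : ∀ n : ℕ, Ψ (LinearMap.id : (Fin n → R) →ₗ[R] (Fin n → R)) = LinearMap.id := by
    intro n
    apply LinearMap.ext; intro x
    have h0 : (φ.hom.toFunctor : SR R ⥤ SR R).map (𝟙 (ob R n))
        = 𝟙 ((φ.hom.toFunctor : SR R ⥤ SR R).obj (ob R n)) := CategoryTheory.Functor.map_id _ _
    have e1 : Ψ (LinearMap.id : (Fin n → R) →ₗ[R] (Fin n → R)) x = castL (R := R) (hT n)
        (toLin ((φ.hom.toFunctor : SR R ⥤ SR R).map (𝟙 (ob R n))) (castL (hT n).symm x)) := rfl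
    rw [e1, h0]
    show castL (R := R) (hT n) (castL (hT n).symm x) = LinearMap.id x
    rw [castL_rl]
    rfl
  have hbijΨ : ∀ n m : ℕ, Function.Bijective (@Ψ n m) := by
    intro n m
    constructor
    · intro f f' h
      have hE : ∀ y : Fin (T n) → R,
          toLin ((φ.hom.toFunctor : SR R ⥤ SR R).map (ofLin f)) y
            = toLin ((φ.hom.toFunctor : SR R ⥤ SR R).map (ofLin f')) y := by
        intro y
        have hy : castL (R := R) (hT m) (toLin ((φ.hom.toFunctor : SR R ⥤ SR R).map (ofLin f))
              (castL (hT n).symm (castL (hT n) y)))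
            = castL (R := R) (hT m) (toLin ((φ.hom.toFunctor : SR R ⥤ SR R).map (ofLin f'))
              (castL (hT n).symm (castL (hT n) y))) :=
          LinearMap.congr_fun h (castL (hT n) y)
        rw [castL_lr] at hy
        have hy2 := congrArg (castL (R := R) (hT m).symm) hy
        rw [castL_lr, castL_lr] at hy2
        exact hy2
      have h3 : (φ.hom.toFunctor : SR R ⥤ SR R).map (ofLin f) = (φ.hom.toFunctor : SR R ⥤ SR R).map (ofLin f') :=
        LinearMap.ext hE
      exact (hmapbij (ob R n) (ob R m)).1 h3
    · intro g
      obtain ⟨f, hf⟩ := (hmapbij (ob R n) (ob R m)).2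
        (show ((φ.hom.toFunctor : SR R ⥤ SR R).obj (ob R n) ⟶ (φ.hom.toFunctor : SR R ⥤ SR R).obj (ob R m)) from
          (castL (R := R) (hT m).symm).comp (g.comp (castL (hT n))))
      have hf' : toLin ((φ.hom.toFunctor : SR R ⥤ SR R).map (ofLin (toLin f)))
          = (castL (R := R) (hT m).symm).comp (g.comp (castL (hT n))) := hf
      refine ⟨toLin f, ?_⟩
      apply LinearMap.ext; intro x
      calc @Ψ n m (toLin f) x
          = castL (R := R) (hT m)
            (toLin ((φ.hom.toFunctor : SR R ⥤ SR R).map (ofLin (toLin f))) (castL (hT n).symm x)) := rfl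
        _ = castL (R := R) (hT m)
            (((castL (R := R) (hT m).symm).comp (g.comp (castL (hT n)))) (castL (hT n).symm x)) := by
            rw [hf']
            rfl
        _ = g x := by
            show castL (R := R) (hT m)
              (castL (hT m).symm (g (castL (hT n) (castL (hT n).symm x)))) = g x
            rw [castL_rl, castL_rl]
  obtain ⟨σ, s', h1, h2⟩ := main_aux R (fun {n m} f => Ψ f) hcompΨ hidΨ hbijΨ
  refine ⟨σ, fun n => (s' n).trans (castAE (hT n).symm), ?_, ?_⟩
  · intro n r a
    show castAE (hT n).symm (s' n (r • a)) = σ r • castAE (hT n).symm (s' n a)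
    rw [h1 n r a, castAE_smul]
  · intro n m f a
    have key : castL (R := R) (hT m) (toLin ((φ.hom.toFunctor : SR R ⥤ SR R).map f)
        (castL (hT n).symm (s' n a))) = s' m (toLin f a) := h2 n m (toLin f) a
    have key2 := congrArg (castL (R := R) (hT m).symm) key
    rw [castL_lr] at key2
    exact key2


/-- if `R` is a ring with invariant basis number, then every automorphism
`φ` of the category `S_R` is semi-inner: there are a ring automorphism `σ` of `R` and
additive isomorphisms `s_n : R^n ≃+ φ(R^n)` with `s_n (r • a) = σ r • s_n a`, such that
`φ(f) ∘ s_n = s_m ∘ f` for every `R`-linear `f : R^n → R^m`. -/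
theorem stmt5 (R : Type) [Ring R]
    (hIBN : ∀ n m : ℕ, Nonempty ((Fin n → R) ≃ₗ[R] (Fin m → R)) → n = m)
    (φ : Aut (Cat.of (SR R))) :
    ∃ (σ : R ≃+* R)
      (s : ∀ n : ℕ, (Fin n → R) ≃+ (Fin ((φ.hom.toFunctor : SR R ⥤ SR R).obj (ob R n)) → R)),
      (∀ (n : ℕ) (r : R) (a : Fin n → R), s n (r • a) = σ r • s n a) ∧
      (∀ (n m : ℕ) (f : ob R n ⟶ ob R m) (a : Fin n → R),
        toLin ((φ.hom.toFunctor : SR R ⥤ SR R).map f) (s n a) = s m (toLin f a)) := by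
  exact stmt5' R hIBN φ
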